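/- Let U ⊆ X and V ⊆ Y be open sets in metric spaces, and F : X ⇒ Y a set-valued mapping with complete graph. Assume that whenever x ∈ U, v ∈ F(x), and t < m(x) = d(x, X∖U), the set F(B(x,t)) is an ℓt-net in B(v, rt) ∩ V, where 0 ≤ ℓ < r. Then F is Milyutin regular on U × V with sur_m F(U|V) ≥ r − ℓ. In particular, if F(B(x,t)) is dense in B(F(x), rt) ∩ V for x ∈ U and t < m(x), then sur_m F(U|V) ≥ r. -/

import Mathlib

open EMetric ENNReal Filter Topology

/-- Density theorem: if for `x ∈ U`, `v ∈ F x`, `t < m(x) = d(x, X∖U)` the set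
`F(B(x,t))` is an `ℓt`-net in `B(v, rt) ∩ V` with `0 ≤ ℓ < r`, then `F` is
Milyutin regular on `U × V` with `sur_m F(U|V) ≥ r − ℓ`. -/
theorem density_theorem {X Y : Type*} [MetricSpace X] [MetricSpace Y]
    (F : X → Set Y) (U : Set X) (V : Set Y) (hU : IsOpen U) (hV : IsOpen V)
    (hcomp : IsComplete {p : X × Y | p.2 ∈ F p.1})
    (r ℓ : ℝ≥0∞) (hlr : ℓ < r) (hrtop : r ≠ ⊤)
    (hnet : ∀ x ∈ U, ∀ v ∈ F x, ∀ t : ℝ≥0∞, t < infEdist x Uᶜ →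
      ∀ y ∈ V, edist y v ≤ r * t →
        ∃ u : X, ∃ w ∈ F u, edist x u ≤ t ∧ edist y w ≤ ℓ * t) :
    ∀ x ∈ U, ∀ t : ℝ≥0∞, t < infEdist x Uᶜ → ∀ y ∈ V,
      (∃ v ∈ F x, edist y v ≤ (r - ℓ) * t) → ∃ u : X, edist x u ≤ t ∧ y ∈ F u := by
  intro x hx t ht y hy hex
  obtain ⟨v, hvF, hyv⟩ := hex
  have hr0 : r ≠ 0 := fun h => by simp [h] at hlr
  have hltop : ℓ ≠ ⊤ := (hlr.trans_le le_top).ne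
  have httop : t ≠ ⊤ := (ht.trans_le le_top).ne
  set q : ℝ≥0∞ := ℓ / r with hqdef
  set a : ℝ≥0∞ := r - ℓ with hadef
  have ha0 : a ≠ 0 := (tsub_pos_of_lt hlr).ne'
  have hatop : a ≠ ⊤ := (tsub_le_self.trans_lt hrtop.lt_top).ne
  set c : ℝ≥0∞ := a / r with hcdef
  have hq1 : q < 1 := by
    rw [hqdef, ENNReal.div_lt_iff (Or.inl hr0) (Or.inl hrtop)]
    simpa using hlr
  have hqtop : q ≠ ⊤ := (ENNReal.div_lt_top hltop hr0).ne
  have hc0 : c ≠ 0 := by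
    rw [hcdef, Ne, ENNReal.div_eq_zero_iff]
    push_neg
    exact ⟨ha0, hrtop⟩
  have hctop : c ≠ ⊤ := (ENNReal.div_lt_top hatop hr0).ne
  have hcq : c + q = 1 := by
    rw [hcdef, hqdef, ENNReal.div_add_div_same, tsub_add_cancel_of_le hlr.le,
      ENNReal.div_self hr0 hrtop]
  have h1q : 1 - q = c := by
    rw [← hcq, ENNReal.add_sub_cancel_right hqtop]
  have hrc : r * c = a := ENNReal.mul_div_cancel hr0 hrtop
  have hlc : ℓ * c = a * q := by
    rw [hcdef, hqdef, ENNReal.div_eq_inv_mul, ENNReal.div_eq_inv_mul]; ring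
  set S : ℕ → ℝ≥0∞ := fun n => ∑ k ∈ Finset.range n, c * t * q ^ k with hSdef
  have hsum : ∑' n : ℕ, c * t * q ^ n = t := by
    rw [ENNReal.tsum_mul_left, tsum_geometric, h1q, mul_comm c t, mul_assoc,
      ENNReal.mul_inv_cancel hc0 hctop, mul_one]
  have hS_le : ∀ n, S n ≤ t := fun n => hsum ▸ ENNReal.sum_le_tsum (Finset.range n)
  have hS_succ : ∀ n, S (n + 1) = S n + c * t * q ^ n := fun n => Finset.sum_range_succ _ n
  set C : ℝ≥0∞ := c * t + (a * t + a * t) with hCdef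
  have hCtop : C ≠ ⊤ := by
    rw [hCdef]
    exact ENNReal.add_ne_top.2 ⟨ENNReal.mul_ne_top hctop httop,
      ENNReal.add_ne_top.2 ⟨ENNReal.mul_ne_top hatop httop, ENNReal.mul_ne_top hatop httop⟩⟩
  -- key iterative step
  have key : ∀ (n : ℕ) (p : X × Y), p.2 ∈ F p.1 → edist y p.2 ≤ a * t * q ^ n →
      edist x p.1 ≤ S n → ∃ p' : X × Y, p'.2 ∈ F p'.1 ∧
        edist y p'.2 ≤ a * t * q ^ (n + 1) ∧ edist x p'.1 ≤ S (n + 1) ∧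
        edist p p' ≤ C * q ^ n := by
    intro n p hpF hyp hxp
    have hSntop : S n ≠ ⊤ := ((hS_le n).trans_lt httop.lt_top).ne
    have hpU : p.1 ∈ U := by
      by_contra h
      have h1 : infEdist x Uᶜ ≤ edist x p.1 := infEdist_le_edist_of_mem h
      exact absurd (h1.trans ((hxp.trans (hS_le n)))) (not_le.2 ht)
    have hmt : c * t * q ^ n < infEdist p.1 Uᶜ := by
      have h1 : infEdist x Uᶜ ≤ infEdist p.1 Uᶜ + edist x p.1 := infEdist_le_infEdist_add_edist
      have h2 : c * t * q ^ n + S n ≤ t := by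
        rw [add_comm, ← hS_succ n]; exact hS_le (n + 1)
      have h3 : c * t * q ^ n + S n < infEdist p.1 Uᶜ + S n :=
        lt_of_le_of_lt h2 (lt_of_lt_of_le ht (h1.trans (add_le_add_right hxp _)))
      exact (ENNReal.add_lt_add_iff_right hSntop).1 h3
    have hyb : edist y p.2 ≤ r * (c * t * q ^ n) := by
      calc edist y p.2 ≤ a * t * q ^ n := hyp
        _ = r * (c * t * q ^ n) := by rw [← mul_assoc, ← hrc]; ring
    obtain ⟨u', w', hw'F, hxu', hyw'⟩ := hnet p.1 hpU p.2 hpF (c * t * q ^ n) hmt y hy hyb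
    refine ⟨(u', w'), hw'F, ?_, ?_, ?_⟩
    · calc edist y w' ≤ ℓ * (c * t * q ^ n) := hyw'
        _ = (ℓ * c) * (t * q ^ n) := by ring
        _ = a * t * q ^ (n + 1) := by rw [hlc]; ring
    · calc edist x u' ≤ edist x p.1 + edist p.1 u' := edist_triangle _ _ _
        _ ≤ S n + c * t * q ^ n := add_le_add hxp hxu'
        _ = S (n + 1) := (hS_succ n).symm
    · rw [Prod.edist_eq]
      have hfst : edist p.1 u' ≤ C * q ^ n := by
        calc edist p.1 u' ≤ c * t * q ^ n := hxu'
          _ ≤ C * q ^ n := mul_le_mul_left (le_add_right le_rfl) _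
      have hsnd : edist p.2 w' ≤ C * q ^ n := by
        calc edist p.2 w' ≤ edist p.2 y + edist y w' := edist_triangle _ _ _
          _ ≤ a * t * q ^ n + ℓ * (c * t * q ^ n) := add_le_add (edist_comm p.2 y ▸ hyp) hyw'
          _ = a * t * q ^ n + a * t * (q ^ n * q) := by
              rw [show ℓ * (c * t * q ^ n) = (ℓ * c) * (t * q ^ n) by ring, hlc]; ring
          _ ≤ a * t * q ^ n + a * t * (q ^ n * 1) :=
              add_le_add_right (mul_le_mul_right (mul_le_mul_right hq1.le _) _) _
          _ = (a * t + a * t) * q ^ n := by ring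
          _ ≤ C * q ^ n := mul_le_mul_left (le_add_left le_rfl) _
      exact max_le hfst hsnd
  choose! next h1 h2 h3 h4 using key
  set f : ℕ → X × Y := fun n => Nat.rec (x, v) (fun n p => next n p) n with hfdef
  have hfs : ∀ n, f (n + 1) = next n (f n) := fun n => rfl
  have inv : ∀ n, (f n).2 ∈ F (f n).1 ∧ edist y (f n).2 ≤ a * t * q ^ n ∧
      edist x (f n).1 ≤ S n := by
    intro n
    induction n with
    | zero =>
      refine ⟨hvF, by simpa using (show edist y (f 0).2 ≤ a * t from hyv), ?_⟩
      rw [show f 0 = (x, v) from rfl]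
      simp [hSdef]
    | succ n ih =>
      rw [hfs]
      exact ⟨h1 n (f n) ih.1 ih.2.1 ih.2.2, h2 n (f n) ih.1 ih.2.1 ih.2.2,
        h3 n (f n) ih.1 ih.2.1 ih.2.2⟩
  have hstep : ∀ n, edist (f n) (f (n + 1)) ≤ C * q ^ n := by
    intro n
    rw [hfs]
    exact h4 n (f n) (inv n).1 (inv n).2.1 (inv n).2.2
  have hcauchy : CauchySeq f := cauchySeq_of_edist_le_geometric q C hq1 hCtop hstep
  have hmem : ∀ n, f n ∈ {p : X × Y | p.2 ∈ F p.1} := fun n => (inv n).1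
  obtain ⟨⟨u, w⟩, huw, hlim⟩ := cauchySeq_tendsto_of_isComplete hcomp hmem hcauchy
  have hfst : Tendsto (fun n => (f n).1) atTop (𝓝 u) :=
    (continuous_fst.tendsto _).comp hlim
  have hsnd : Tendsto (fun n => (f n).2) atTop (𝓝 w) :=
    (continuous_snd.tendsto _).comp hlim
  have hq0lim : Tendsto (fun n : ℕ => a * t * q ^ n) atTop (𝓝 0) := by
    have h := ENNReal.Tendsto.const_mul (ENNReal.tendsto_pow_atTop_nhds_zero_of_lt_one hq1)
      (Or.inr (ENNReal.mul_ne_top hatop httop) : (0 : ℝ≥0∞) ≠ 0 ∨ a * t ≠ ⊤)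
    simpa using h
  have hde : Tendsto (fun n => edist y (f n).2) atTop (𝓝 0) :=
    tendsto_of_tendsto_of_tendsto_of_le_of_le tendsto_const_nhds hq0lim
      (fun n => zero_le) (fun n => (inv n).2.1)
  have hwy : w = y := by
    have h2 : Tendsto (fun n => edist y (f n).2) atTop (𝓝 (edist y w)) :=
      Tendsto.edist tendsto_const_nhds hsnd
    have h0 : edist y w = 0 := tendsto_nhds_unique h2 hde
    exact (edist_eq_zero.1 h0).symm
  have hxu : edist x u ≤ t := by
    have h2 : Tendsto (fun n => edist x (f n).1) atTop (𝓝 (edist x u)) :=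
      Tendsto.edist tendsto_const_nhds hfst
    exact le_of_tendsto' h2 fun n => (inv n).2.2.trans (hS_le n)
  exact ⟨u, hxu, hwy ▸ huw⟩
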